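/- Let v be a semiconcave function on an open set Ω ⊂ ℝⁿ and suppose the directional derivative formula min_{p ∈ D⁺v(x₀)} ⟨p, θ⟩ = lim_{h→0⁺} (v(x₀ + hθ) - v(x₀))/h holds. If x : [0,τ] → Ω is a Lipschitz arc with right derivative ẋ⁺(s) = A(x(s))p(s) for all s, where p(s) ∈ D⁺v(x(s)) minimizes q ↦ ⟨A(x(s))q, q⟩ over D⁺v(x(s)), A(·) symmetric positive definite and continuous, and p(s) ≠ 0 for all s ∈ [0,τ], then v(x(s₁)) < v(x(s₂)) for all 0 ≤ s₁ < s₂ ≤ τ. -/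

import Mathlib

open RealInnerProductSpace
open Set Filter

set_option maxHeartbeats 2000000

/-- The (Dini) superdifferential of `v` at `x`, relative to `Ω`. -/
def superdiffOn {n : ℕ} (v : EuclideanSpace ℝ (Fin n) → ℝ) (Ω : Set (EuclideanSpace ℝ (Fin n)))
    (x : EuclideanSpace ℝ (Fin n)) : Set (EuclideanSpace ℝ (Fin n)) :=
  {p | ∀ ε > 0, ∃ δ > 0, ∀ y ∈ Ω, ‖y - x‖ < δ → v y - v x - ⟪p, y - x⟫ ≤ ε * ‖y - x‖}

lemma superdiffOn_convex {n : ℕ} (v : EuclideanSpace ℝ (Fin n) → ℝ)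
    (Ω : Set (EuclideanSpace ℝ (Fin n))) (x : EuclideanSpace ℝ (Fin n))
    {p₁ p₂ : EuclideanSpace ℝ (Fin n)} (h₁ : p₁ ∈ superdiffOn v Ω x)
    (h₂ : p₂ ∈ superdiffOn v Ω x) {t : ℝ} (ht0 : 0 ≤ t) (ht1 : t ≤ 1) :
    (1 - t) • p₁ + t • p₂ ∈ superdiffOn v Ω x := by
  intro ε hε
  obtain ⟨δ₁, hδ₁, H₁⟩ := h₁ ε hε
  obtain ⟨δ₂, hδ₂, H₂⟩ := h₂ ε hε
  refine ⟨min δ₁ δ₂, lt_min hδ₁ hδ₂, fun y hy hny => ?_⟩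
  have e1 := H₁ y hy (lt_of_lt_of_le hny (min_le_left _ _))
  have e2 := H₂ y hy (lt_of_lt_of_le hny (min_le_right _ _))
  have : ⟪(1 - t) • p₁ + t • p₂, y - x⟫ = (1 - t) * ⟪p₁, y - x⟫ + t * ⟪p₂, y - x⟫ := by
    rw [inner_add_left, real_inner_smul_left, real_inner_smul_left]
  nlinarith [mul_le_mul_of_nonneg_left e1 (by linarith : (0:ℝ) ≤ 1 - t),
    mul_le_mul_of_nonneg_left e2 ht0]

lemma abs_coord_le_norm {n : ℕ} (x : EuclideanSpace ℝ (Fin n)) (i : Fin n) : |x i| ≤ ‖x‖ := by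
  rw [EuclideanSpace.norm_eq]
  have h1 : |x i| = Real.sqrt (|x i|^2) := by
    rw [Real.sqrt_sq_eq_abs, abs_abs]
  rw [h1]
  apply Real.sqrt_le_sqrt
  exact Finset.single_le_sum (f := fun j => |x j|^2) (fun j _ => sq_nonneg _) (Finset.mem_univ i)

lemma mono_glue (f : ℝ → ℝ) (τ : ℝ)
    (husc : ∀ s ∈ Icc 0 τ, ∀ ε > 0, ∃ δ > 0, ∀ u ∈ Icc 0 τ, |u - s| < δ → f u ≤ f s + ε)
    (hLI : ∀ s ∈ Ico 0 τ, ∃ δ > 0, ∀ t, s < t → t ≤ s + δ → t ≤ τ → f s < f t) :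
    ∀ s₁ ∈ Icc 0 τ, ∀ s₂ ∈ Icc 0 τ, s₁ < s₂ → f s₁ < f s₂ := by
  have mono : ∀ s₁ ∈ Icc 0 τ, ∀ s₂ ∈ Icc 0 τ, s₁ ≤ s₂ → f s₁ ≤ f s₂ := by
    intro s₁ h₁ s₂ h₂ h12
    set E : Set ℝ := {t | t ∈ Icc s₁ s₂ ∧ ∀ u ∈ Icc s₁ t, f s₁ ≤ f u} with hE
    have hs₁E : s₁ ∈ E := by
      refine ⟨⟨le_refl _, h12⟩, fun u hu => ?_⟩
      have : u = s₁ := le_antisymm hu.2 hu.1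
      rw [this]
    have hEne : E.Nonempty := ⟨s₁, hs₁E⟩
    have hbdd : BddAbove E := ⟨s₂, fun t ht => ht.1.2⟩
    set S := sSup E with hS
    have hS₁ : s₁ ≤ S := le_csSup hbdd hs₁E
    have hS₂ : S ≤ s₂ := csSup_le hEne (fun t ht => ht.1.2)
    have hSmem : S ∈ Icc 0 τ := ⟨le_trans h₁.1 hS₁, le_trans hS₂ h₂.2⟩
    have hbelow : ∀ u, s₁ ≤ u → u < S → f s₁ ≤ f u := by
      intro u hu huS
      obtain ⟨t, htE, hut⟩ := exists_lt_of_lt_csSup hEne huS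
      exact htE.2 u ⟨hu, hut.le⟩
    have hfS : f s₁ ≤ f S := by
      rcases eq_or_lt_of_le hS₁ with h | h
      · rw [← h]
      · apply le_of_forall_pos_le_add
        intro ε hε
        obtain ⟨δ, hδ, hδ'⟩ := husc S hSmem ε hε
        set u := max s₁ (S - δ/2) with hu
        have hu₁ : s₁ ≤ u := le_max_left _ _
        have huS : u < S := max_lt h (by linarith)
        have huI : u ∈ Icc 0 τ := ⟨le_trans h₁.1 hu₁, le_trans huS.le hSmem.2⟩
        have habs : |u - S| < δ := by
          rw [abs_sub_lt_iff]
          constructor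
          · linarith
          · have : S - δ/2 ≤ u := le_max_right _ _
            linarith
        have := hδ' u huI habs
        have := hbelow u hu₁ huS
        linarith
    have hSE : S ∈ E := by
      refine ⟨⟨hS₁, hS₂⟩, fun u hu => ?_⟩
      rcases lt_or_eq_of_le hu.2 with h | h
      · exact hbelow u hu.1 h
      · rw [h]; exact hfS
    have hSs₂ : S = s₂ := by
      by_contra hne
      have hSlt : S < s₂ := lt_of_le_of_ne hS₂ hne
      obtain ⟨δ, hδ, hδ'⟩ := hLI S ⟨hSmem.1, lt_of_lt_of_le hSlt h₂.2⟩
      set t := min (S + δ) s₂ with ht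
      have htS : S < t := lt_min (by linarith) hSlt
      have htE : t ∈ E := by
        refine ⟨⟨le_trans hS₁ htS.le, min_le_right _ _⟩, fun u hu => ?_⟩
        rcases le_or_gt u S with h | h
        · exact hSE.2 u ⟨hu.1, h⟩
        · have h1 : u ≤ S + δ := le_trans hu.2 (min_le_left _ _)
          have h2 : u ≤ τ := le_trans (le_trans hu.2 (min_le_right _ _)) h₂.2
          have := hδ' u h h1 h2
          linarith [hfS]
      have := le_csSup hbdd htE
      linarith
    rw [← hSs₂]
    exact hSE.2 S ⟨hS₁, le_refl _⟩
  intro s₁ h₁ s₂ h₂ hlt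
  obtain ⟨δ, hδ, hδ'⟩ := hLI s₁ ⟨h₁.1, lt_of_lt_of_le hlt h₂.2⟩
  set t₀ := min (s₁ + δ) s₂ with ht₀
  have h1 : s₁ < t₀ := lt_min (by linarith) hlt
  have h2 : t₀ ≤ τ := le_trans (min_le_right _ _) h₂.2
  have h3 : f s₁ < f t₀ := hδ' t₀ h1 (min_le_left _ _) h2
  have h4 : f t₀ ≤ f s₂ :=
    mono t₀ ⟨le_trans h₁.1 h1.le, h2⟩ s₂ h₂ (min_le_right _ _)
  linarith

lemma local_lower_bound {n : ℕ} (v : EuclideanSpace ℝ (Fin n) → ℝ)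
    (Ω : Set (EuclideanSpace ℝ (Fin n))) (C : ℝ)
    (hsc : ∀ z ∈ Ω, ∀ q ∈ superdiffOn v Ω z, ∀ y ∈ Ω,
      v y ≤ v z + ⟪q, y - z⟫ + C / 2 * ‖y - z‖ ^ 2)
    (hne : ∀ z ∈ Ω, (superdiffOn v Ω z).Nonempty)
    (x₀ : EuclideanSpace ℝ (Fin n)) (R : ℝ) (hR : 0 < R)
    (hball : Metric.closedBall x₀ (2*R) ⊆ Ω) :
    ∃ M : ℝ, ∀ y ∈ Metric.closedBall x₀ (R/(n+1)), M ≤ v y := by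
  classical
  set e : Fin n → EuclideanSpace ℝ (Fin n) := fun i => EuclideanSpace.single i (1:ℝ) with he
  set r : ℝ := R/(n+1) with hrdef
  have hr : 0 < r := by positivity
  have hrR : r ≤ R := by
    rw [hrdef, div_le_iff₀ (by positivity)]
    nlinarith [Nat.cast_nonneg (α := ℝ) n]
  set EC : ℝ := |C|/2 * (2*R)^2 with hEC
  set D : ℝ := ∑ i, (|v x₀ - v (x₀ + R • e i)| + |v x₀ - v (x₀ - R • e i)|) with hD
  refine ⟨v x₀ - D - EC, fun y hy => ?_⟩
  rw [Metric.mem_closedBall, dist_eq_norm] at hy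
  have hyΩ : y ∈ Ω := hball (by
    rw [Metric.mem_closedBall, dist_eq_norm]; linarith)
  have hx₀Ω : x₀ ∈ Ω := hball (by simp; positivity)
  have hnes : ∀ i : Fin n, ‖R • e i‖ = R := by
    intro i
    rw [norm_smul]
    simp only [he]
    rw [EuclideanSpace.norm_single]
    simp [abs_of_pos hR]
  have hmemp : ∀ i : Fin n, x₀ + R • e i ∈ Ω := by
    intro i
    apply hball
    rw [Metric.mem_closedBall, dist_eq_norm]
    have h1 : x₀ + R • e i - x₀ = R • e i := by abel
    rw [h1, hnes i]; linarith
  have hmemm : ∀ i : Fin n, x₀ - R • e i ∈ Ω := by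
    intro i
    apply hball
    rw [Metric.mem_closedBall, dist_eq_norm]
    have h1 : x₀ - R • e i - x₀ = -(R • e i) := by abel
    rw [h1, norm_neg, hnes i]; linarith
  obtain ⟨q, hq⟩ := hne y hyΩ
  have hsupp : ∀ z ∈ Ω, v z ≤ v y + ⟪q, z - y⟫ + C / 2 * ‖z - y‖ ^ 2 :=
    fun z hz => hsc y hyΩ q hq z hz
  set c : Fin n → ℝ := fun i => y i - x₀ i with hc
  have hcb : ∀ i, |c i| ≤ r := by
    intro i
    have h1 : c i = (y - x₀) i := by simp [hc]
    rw [h1]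
    exact le_trans (abs_coord_le_norm _ i) hy
  set a : Fin n → ℝ := fun i => max (c i) 0 / R with ha
  set b : Fin n → ℝ := fun i => max (-c i) 0 / R with hb
  have ha0 : ∀ i, 0 ≤ a i := fun i => div_nonneg (le_max_right _ _) hR.le
  have hb0 : ∀ i, 0 ≤ b i := fun i => div_nonneg (le_max_right _ _) hR.le
  have hab : ∀ i, (a i - b i) * R = c i := by
    intro i
    show (max (c i) 0 / R - max (-c i) 0 / R) * R = c i
    rcases le_total (c i) 0 with h | h
    · rw [max_eq_right h, max_eq_left (by linarith : (0:ℝ) ≤ -c i)]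
      field_simp
      ring
    · rw [max_eq_left h, max_eq_right (by linarith : -c i ≤ (0:ℝ))]
      field_simp
      ring
  have habs : ∀ i, a i + b i = |c i| / R := by
    intro i
    show max (c i) 0 / R + max (-c i) 0 / R = |c i| / R
    rcases le_total (c i) 0 with h | h
    · rw [max_eq_right h, max_eq_left (by linarith : (0:ℝ) ≤ -c i), abs_of_nonpos h]
      ring
    · rw [max_eq_left h, max_eq_right (by linarith : -c i ≤ (0:ℝ)), abs_of_nonneg h]
      ring
  have habR : ∀ i, a i + b i ≤ 1 := by
    intro i
    rw [habs i, div_le_one hR]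
    linarith [hcb i]
  have ha1 : ∀ i, a i ≤ 1 := fun i => by linarith [habR i, hb0 i]
  have hb1 : ∀ i, b i ≤ 1 := fun i => by linarith [habR i, ha0 i]
  set s : ℝ := ∑ i, (a i + b i) with hs
  have hs0 : 0 ≤ s := Finset.sum_nonneg (fun i _ => by linarith [ha0 i, hb0 i])
  have hs1 : s ≤ 1 := by
    rw [hs]
    have hterm : ∀ i ∈ Finset.univ, a i + b i ≤ r / R := by
      intro i _
      rw [habs i]
      gcongr
      exact hcb i
    calc ∑ i, (a i + b i) ≤ ∑ _i : Fin n, r/R := Finset.sum_le_sum hterm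
      _ = n * (r/R) := by simp [Finset.sum_const, nsmul_eq_mul]
      _ ≤ 1 := by
          have h1 : (n:ℝ) * (r/R) = n/(n+1) := by
            rw [hrdef]; field_simp
          rw [h1, div_le_one (by positivity)]
          linarith
  -- error bound
  have hECb : ∀ z : EuclideanSpace ℝ (Fin n), ‖z - y‖ ≤ 2*R → C/2 * ‖z-y‖^2 ≤ EC := by
    intro z hz
    have h1 : C/2 * ‖z-y‖^2 ≤ |C|/2 * ‖z-y‖^2 := by
      apply mul_le_mul_of_nonneg_right ?_ (sq_nonneg _)
      have := le_abs_self C; linarith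
    have h2 : |C|/2 * ‖z-y‖^2 ≤ |C|/2 * (2*R)^2 := by
      apply mul_le_mul_of_nonneg_left ?_ (by positivity)
      nlinarith [norm_nonneg (z-y)]
    rw [hEC]; linarith
  have hxy : ‖x₀ - y‖ ≤ r := by rw [norm_sub_rev]; exact hy
  have hnp : ∀ i : Fin n, ‖x₀ + R • e i - y‖ ≤ 2*R := by
    intro i
    have h1 : x₀ + R • e i - y = (x₀ - y) + R • e i := by abel
    rw [h1]
    calc ‖(x₀ - y) + R • e i‖ ≤ ‖x₀ - y‖ + ‖R • e i‖ := norm_add_le _ _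
      _ ≤ r + R := by rw [hnes i]; linarith
      _ ≤ 2*R := by linarith
  have hnm : ∀ i : Fin n, ‖x₀ - R • e i - y‖ ≤ 2*R := by
    intro i
    have h1 : x₀ - R • e i - y = (x₀ - y) - R • e i := by abel
    rw [h1]
    calc ‖(x₀ - y) - R • e i‖ ≤ ‖x₀ - y‖ + ‖R • e i‖ := norm_sub_le _ _
      _ ≤ r + R := by rw [hnes i]; linarith
      _ ≤ 2*R := by linarith
  have hplus : ∀ i, v (x₀ + R • e i) ≤ v y + ⟪q, x₀ + R • e i - y⟫ + EC := by
    intro i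
    have h1 := hsupp _ (hmemp i)
    have h2 := hECb _ (hnp i)
    linarith
  have hminus : ∀ i, v (x₀ - R • e i) ≤ v y + ⟪q, x₀ - R • e i - y⟫ + EC := by
    intro i
    have h1 := hsupp _ (hmemm i)
    have h2 := hECb _ (hnm i)
    linarith
  have h0 : v x₀ ≤ v y + ⟪q, x₀ - y⟫ + EC := by
    have h1 := hsupp _ hx₀Ω
    have h2 := hECb x₀ (by linarith)
    linarith
  -- vector identity
  have hsum_ce : ∑ i, c i • e i = y - x₀ := by
    have h := (EuclideanSpace.basisFun (Fin n) ℝ).sum_repr (y - x₀)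
    simp only [EuclideanSpace.basisFun_apply, EuclideanSpace.basisFun_repr] at h
    rw [← h]
    apply Finset.sum_congr rfl
    intro i _
    congr 1
  -- inner identity
  have hinner : (1-s) * ⟪q, x₀ - y⟫
      + ∑ i, (a i * ⟪q, x₀ + R • e i - y⟫ + b i * ⟪q, x₀ - R • e i - y⟫) = 0 := by
    have expand : ∀ i : Fin n, a i * ⟪q, x₀ + R • e i - y⟫ + b i * ⟪q, x₀ - R • e i - y⟫
        = (a i + b i) * ⟪q, x₀ - y⟫ + c i * ⟪q, e i⟫ := by
      intro i
      have h1 : x₀ + R • e i - y = (x₀ - y) + R • e i := by abel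
      have h2 : x₀ - R • e i - y = (x₀ - y) - R • e i := by abel
      rw [h1, h2]
      simp only [inner_add_right, inner_sub_right, real_inner_smul_right]
      linear_combination (inner ℝ q (e i) : ℝ) * hab i
    rw [Finset.sum_congr rfl (fun i _ => expand i), Finset.sum_add_distrib, ← Finset.sum_mul]
    have hce : ∑ i, c i * ⟪q, e i⟫ = ⟪q, y - x₀⟫ := by
      rw [← hsum_ce, inner_sum]
      apply Finset.sum_congr rfl
      intro i _
      rw [real_inner_smul_right]
    rw [hce]
    have hneg : (⟪q, y - x₀⟫ : ℝ) = -⟪q, x₀ - y⟫ := by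
      rw [← inner_neg_right]
      congr 1
      abel
    rw [hneg, ← hs]
    ring
  -- key1
  have key1 : s * v x₀ - D ≤ ∑ i, (a i * v (x₀ + R • e i) + b i * v (x₀ - R • e i)) := by
    have hterm : ∀ i ∈ Finset.univ, (a i + b i) * v x₀
        - (|v x₀ - v (x₀ + R • e i)| + |v x₀ - v (x₀ - R • e i)|)
        ≤ a i * v (x₀ + R • e i) + b i * v (x₀ - R • e i) := by
      intro i _
      have h1 : a i * (v x₀ - v (x₀ + R • e i)) ≤ |v x₀ - v (x₀ + R • e i)| := by
        nlinarith [mul_nonneg (ha0 i) (sub_nonneg.mpr (le_abs_self (v x₀ - v (x₀ + R • e i)))),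
          mul_nonneg (sub_nonneg.mpr (ha1 i)) (abs_nonneg (v x₀ - v (x₀ + R • e i)))]
      have h2 : b i * (v x₀ - v (x₀ - R • e i)) ≤ |v x₀ - v (x₀ - R • e i)| := by
        nlinarith [mul_nonneg (hb0 i) (sub_nonneg.mpr (le_abs_self (v x₀ - v (x₀ - R • e i)))),
          mul_nonneg (sub_nonneg.mpr (hb1 i)) (abs_nonneg (v x₀ - v (x₀ - R • e i)))]
      nlinarith [h1, h2]
    have hsum := Finset.sum_le_sum hterm
    have e1 : ∑ i, ((a i + b i) * v x₀
        - (|v x₀ - v (x₀ + R • e i)| + |v x₀ - v (x₀ - R • e i)|))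
        = (∑ i, (a i + b i)) * v x₀ - D := by
      rw [Finset.sum_sub_distrib, ← Finset.sum_mul, hD]
    rw [e1] at hsum
    rw [hs]
    exact hsum
  -- key2
  have key2 : ∑ i, (a i * v (x₀ + R • e i) + b i * v (x₀ - R • e i))
      ≤ s * (v y + EC) + ∑ i, (a i * ⟪q, x₀ + R • e i - y⟫ + b i * ⟪q, x₀ - R • e i - y⟫) := by
    have hterm : ∀ i ∈ Finset.univ, a i * v (x₀ + R • e i) + b i * v (x₀ - R • e i)
        ≤ (a i + b i) * (v y + EC) + (a i * ⟪q, x₀ + R • e i - y⟫ + b i * ⟪q, x₀ - R • e i - y⟫) := by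
      intro i _
      nlinarith [mul_le_mul_of_nonneg_left (hplus i) (ha0 i),
        mul_le_mul_of_nonneg_left (hminus i) (hb0 i)]
    have hsum := Finset.sum_le_sum hterm
    have e1 : ∑ i, ((a i + b i) * (v y + EC)
        + (a i * ⟪q, x₀ + R • e i - y⟫ + b i * ⟪q, x₀ - R • e i - y⟫))
        = (∑ i, (a i + b i)) * (v y + EC)
          + ∑ i, (a i * ⟪q, x₀ + R • e i - y⟫ + b i * ⟪q, x₀ - R • e i - y⟫) := by
      rw [Finset.sum_add_distrib, ← Finset.sum_mul]
    rw [e1] at hsum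
    rw [hs]
    exact hsum
  have h0' : (1-s) * v x₀ ≤ (1-s) * (v y + ⟪q, x₀ - y⟫ + EC) :=
    mul_le_mul_of_nonneg_left h0 (by linarith)
  nlinarith [key1, key2, hinner, h0']

/-- Along a generalized characteristic whose right derivative `ẋ⁺(s) = A(x(s))p(s)` selects
the minimal-energy element `p(s) ≠ 0` of `D⁺v(x(s))`, the value of `v` is strictly
increasing. -/
theorem strict_increase_along_characteristic {n : ℕ}
    (Ω : Set (EuclideanSpace ℝ (Fin n))) (hΩo : IsOpen Ω)
    (v : EuclideanSpace ℝ (Fin n) → ℝ) (C : ℝ)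
    (hsc : ∀ z ∈ Ω, ∀ q ∈ superdiffOn v Ω z, ∀ y ∈ Ω,
      v y ≤ v z + ⟪q, y - z⟫ + C / 2 * ‖y - z‖ ^ 2)
    (hdir : ∀ x₀ ∈ Ω, ∀ θ : EuclideanSpace ℝ (Fin n), ∃ m : ℝ,
      IsLeast {r : ℝ | ∃ p ∈ superdiffOn v Ω x₀, r = ⟪p, θ⟫} m ∧
      Tendsto (fun h : ℝ => (v (x₀ + h • θ) - v x₀) / h) (nhdsWithin 0 (Ioi 0)) (nhds m))
    (A : EuclideanSpace ℝ (Fin n) → EuclideanSpace ℝ (Fin n) →L[ℝ] EuclideanSpace ℝ (Fin n))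
    (hAcont : Continuous A)
    (hAsymm : ∀ x p q, ⟪A x p, q⟫ = ⟪p, A x q⟫)
    (hApos : ∀ x p, p ≠ 0 → 0 < ⟪A x p, p⟫)
    (τ : ℝ) (hτ : 0 < τ)
    (γ : ℝ → EuclideanSpace ℝ (Fin n)) (L : NNReal)
    (hLip : LipschitzOnWith L γ (Icc 0 τ)) (hmaps : ∀ s ∈ Icc 0 τ, γ s ∈ Ω)
    (p : ℝ → EuclideanSpace ℝ (Fin n))
    (hpmem : ∀ s ∈ Icc 0 τ, p s ∈ superdiffOn v Ω (γ s))
    (hpmin : ∀ s ∈ Icc 0 τ, ∀ q ∈ superdiffOn v Ω (γ s),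
      ⟪A (γ s) (p s), p s⟫ ≤ ⟪A (γ s) q, q⟫)
    (hderiv : ∀ s ∈ Icc 0 τ, HasDerivWithinAt γ (A (γ s) (p s)) (Ici s) s)
    (hpne : ∀ s ∈ Icc 0 τ, p s ≠ 0) :
    ∀ s₁ ∈ Icc 0 τ, ∀ s₂ ∈ Icc 0 τ, s₁ < s₂ → v (γ s₁) < v (γ s₂) := by
  have hLpos : (0:ℝ) ≤ (L:ℝ) := L.coe_nonneg
  -- nonemptiness of the superdifferential
  have hne : ∀ z ∈ Ω, (superdiffOn v Ω z).Nonempty := by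
    intro z hz
    obtain ⟨m, hleast, -⟩ := hdir z hz 0
    obtain ⟨p₀, hp₀, -⟩ := hleast.1
    exact ⟨p₀, hp₀⟩
  -- upper semicontinuity along the curve
  have husc : ∀ s ∈ Icc 0 τ, ∀ ε > 0, ∃ δ > 0, ∀ u ∈ Icc 0 τ,
      |u - s| < δ → v (γ u) ≤ v (γ s) + ε := by
    intro s hs ε hε
    have hzΩ : γ s ∈ Ω := hmaps s hs
    obtain ⟨q₀, hq₀⟩ := hne (γ s) hzΩ
    set B : ℝ := ‖q₀‖ + |C|/2 with hB
    have hB0 : 0 ≤ B := by positivity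
    set d : ℝ := min 1 (ε/(B+1)) with hd
    have hd0 : 0 < d := lt_min one_pos (by positivity)
    have hd1 : d ≤ 1 := min_le_left _ _
    have hd2 : d ≤ ε/(B+1) := min_le_right _ _
    clear_value B d
    have hkey : B * d ≤ ε := by
      have h4 : B * d ≤ B * (ε/(B+1)) := mul_le_mul_of_nonneg_left hd2 hB0
      have h5 : B * (ε/(B+1)) ≤ ε := by
        rw [← mul_div_assoc, div_le_iff₀ (by linarith : (0:ℝ) < B+1)]
        nlinarith
      linarith
    refine ⟨d/((L:ℝ)+1), div_pos hd0 (by positivity), fun u hu hud => ?_⟩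
    have hyΩ : γ u ∈ Ω := hmaps u hu
    have hdist : ‖γ u - γ s‖ ≤ d := by
      have h1 : dist (γ u) (γ s) ≤ (L:ℝ) * dist u s := hLip.dist_le_mul u hu s hs
      rw [Real.dist_eq] at h1
      rw [← dist_eq_norm]
      have h2 : (L:ℝ) * |u - s| ≤ (L:ℝ) * (d/((L:ℝ)+1)) :=
        mul_le_mul_of_nonneg_left hud.le hLpos
      have h3 : (L:ℝ) * (d/((L:ℝ)+1)) ≤ d := by
        rw [← mul_div_assoc, div_le_iff₀ (by positivity : (0:ℝ) < (L:ℝ)+1)]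
        nlinarith
      linarith
    have hsupp := hsc (γ s) hzΩ q₀ hq₀ (γ u) hyΩ
    have hcs : ⟪q₀, γ u - γ s⟫ ≤ ‖q₀‖ * d := by
      calc ⟪q₀, γ u - γ s⟫ ≤ ‖q₀‖ * ‖γ u - γ s‖ := real_inner_le_norm _ _
        _ ≤ ‖q₀‖ * d := mul_le_mul_of_nonneg_left hdist (norm_nonneg _)
    have hsq : C/2 * ‖γ u - γ s‖^2 ≤ |C|/2 * d^2 := by
      have h1 : C/2 * ‖γ u - γ s‖^2 ≤ |C|/2 * ‖γ u - γ s‖^2 := by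
        apply mul_le_mul_of_nonneg_right ?_ (sq_nonneg _)
        have := le_abs_self C; linarith
      have h2 : |C|/2 * ‖γ u - γ s‖^2 ≤ |C|/2 * d^2 := by
        apply mul_le_mul_of_nonneg_left ?_ (by positivity)
        nlinarith [norm_nonneg (γ u - γ s)]
      linarith
    have hd2d : |C|/2 * d^2 ≤ |C|/2 * d := by
      apply mul_le_mul_of_nonneg_left ?_ (by positivity)
      nlinarith
    have hBd : B * d = ‖q₀‖*d + |C|/2*d := by rw [hB]; ring
    linarith
  -- local strict increase to the right
  have hLI : ∀ s ∈ Ico 0 τ, ∃ δ > 0, ∀ t, s < t → t ≤ s + δ → t ≤ τ →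
      v (γ s) < v (γ t) := by
    intro s hs
    have hsmem : s ∈ Icc 0 τ := ⟨hs.1, hs.2.le⟩
    set x₀ := γ s with hx₀def
    have hx₀Ω : x₀ ∈ Ω := hmaps s hsmem
    clear_value x₀
    -- a ball around x₀ inside Ω
    obtain ⟨ε₁, hε₁, hball₁⟩ := Metric.isOpen_iff.mp hΩo x₀ hx₀Ω
    set R : ℝ := ε₁/4 with hRdef
    have hR : 0 < R := by positivity
    have hball : Metric.closedBall x₀ (2*R) ⊆ Ω := by
      refine subset_trans ?_ hball₁
      intro z hz
      rw [Metric.mem_closedBall] at hz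
      rw [Metric.mem_ball]
      have : 2*R < ε₁ := by rw [hRdef]; linarith
      linarith
    clear_value R
    set r : ℝ := R/(n+1) with hrdef
    have hr : 0 < r := by positivity
    have hrR : r ≤ R := by
      rw [hrdef, div_le_iff₀ (by positivity)]
      nlinarith [Nat.cast_nonneg (α := ℝ) n]
    -- lower bound on ball of radius r
    obtain ⟨M, hM⟩ := local_lower_bound v Ω C hsc hne x₀ R hR hball
    rw [← hrdef] at hM
    clear_value r
    -- upper bound on ball of radius 2R
    obtain ⟨q₀, hq₀⟩ := hne x₀ hx₀Ω
    set U : ℝ := v x₀ + ‖q₀‖*(2*R) + |C|/2*(2*R)^2 with hU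
    have hUbd : ∀ z ∈ Metric.closedBall x₀ (2*R), v z ≤ U := by
      intro z hz
      rw [Metric.mem_closedBall, dist_eq_norm] at hz
      have h1 := hsc x₀ hx₀Ω q₀ hq₀ z (hball (by rw [Metric.mem_closedBall, dist_eq_norm]; exact hz))
      have h2 : ⟪q₀, z - x₀⟫ ≤ ‖q₀‖ * (2*R) := by
        calc ⟪q₀, z - x₀⟫ ≤ ‖q₀‖ * ‖z - x₀‖ := real_inner_le_norm _ _
          _ ≤ ‖q₀‖ * (2*R) := mul_le_mul_of_nonneg_left hz (norm_nonneg _)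
      have h3 : C/2 * ‖z - x₀‖^2 ≤ |C|/2*(2*R)^2 := by
        have ha : C/2 * ‖z - x₀‖^2 ≤ |C|/2 * ‖z - x₀‖^2 := by
          apply mul_le_mul_of_nonneg_right ?_ (sq_nonneg _)
          have := le_abs_self C; linarith
        have hb : |C|/2 * ‖z - x₀‖^2 ≤ |C|/2 * (2*R)^2 := by
          apply mul_le_mul_of_nonneg_left ?_ (by positivity)
          nlinarith [norm_nonneg (z - x₀)]
        linarith
      rw [hU]; linarith
    have hMU : M ≤ U := by
      have h1 : M ≤ v x₀ := hM x₀ (Metric.mem_closedBall_self hr.le)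
      have h2 : v x₀ ≤ U := by
        have h3 : 0 ≤ ‖q₀‖*(2*R) := by
          apply mul_nonneg (norm_nonneg _); linarith
        have h4 : 0 ≤ |C|/2*(2*R)^2 := by positivity
        rw [hU]; linarith
      linarith
    clear_value U
    -- bound on superdifferential elements near x₀
    set K : ℝ := (U - M + |C|/2 * (r/2)^2) / (r/2) with hK
    have hK0 : 0 ≤ K := by
      rw [hK]
      apply div_nonneg ?_ (by linarith)
      have h3 : 0 ≤ |C|/2*(r/2)^2 := by positivity
      linarith
    clear_value K
    have hKbound : ∀ z ∈ Metric.closedBall x₀ (r/2), ∀ q' ∈ superdiffOn v Ω z, ‖q'‖ ≤ K := by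
      intro z hz q' hq'
      rcases eq_or_ne q' 0 with h | h
      · rw [h, norm_zero]; exact hK0
      rw [Metric.mem_closedBall, dist_eq_norm] at hz
      have hzΩ : z ∈ Ω := hball (by
        rw [Metric.mem_closedBall, dist_eq_norm]
        have : r/2 ≤ 2*R := by linarith
        linarith)
      set z' := z - (r/2) • (‖q'‖⁻¹ • q') with hz'
      clear_value z'
      have hq'norm : ‖(r/2) • (‖q'‖⁻¹ • q')‖ = r/2 := by
        rw [norm_smul, norm_smul, norm_inv, norm_norm]
        rw [inv_mul_cancel₀ (norm_ne_zero_iff.mpr h)]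
        rw [mul_one, Real.norm_eq_abs, abs_of_pos (by positivity : (0:ℝ) < r/2)]
      have hz'ball : z' ∈ Metric.closedBall x₀ r := by
        rw [Metric.mem_closedBall, dist_eq_norm]
        have h1 : z' - x₀ = (z - x₀) - (r/2) • (‖q'‖⁻¹ • q') := by rw [hz']; abel
        rw [h1]
        calc ‖(z - x₀) - (r/2) • (‖q'‖⁻¹ • q')‖
            ≤ ‖z - x₀‖ + ‖(r/2) • (‖q'‖⁻¹ • q')‖ := norm_sub_le _ _
          _ ≤ r/2 + r/2 := by rw [hq'norm]; linarith
          _ = r := by ring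
      have hz'Ω : z' ∈ Ω := hball (by
        rw [Metric.mem_closedBall]
        rw [Metric.mem_closedBall] at hz'ball
        linarith)
      have hsupp := hsc z hzΩ q' hq' z' hz'Ω
      have hinner : ⟪q', z' - z⟫ = -((r/2) * ‖q'‖) := by
        have h1 : z' - z = -((r/2) • (‖q'‖⁻¹ • q')) := by rw [hz']; abel
        rw [h1, inner_neg_right, real_inner_smul_right, real_inner_smul_right]
        rw [real_inner_self_eq_norm_sq]
        have h2 : ‖q'‖⁻¹ * ‖q'‖^2 = ‖q'‖ := by
          rw [sq, ← mul_assoc, inv_mul_cancel₀ (norm_ne_zero_iff.mpr h), one_mul]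
        rw [h2]
      have hnz' : ‖z' - z‖ = r/2 := by
        have h1 : z' - z = -((r/2) • (‖q'‖⁻¹ • q')) := by rw [hz']; abel
        rw [h1, norm_neg, hq'norm]
      have hvz : v z ≤ U := hUbd z (by
        rw [Metric.mem_closedBall, dist_eq_norm]
        have : r/2 ≤ 2*R := by linarith
        linarith)
      have hvz' : M ≤ v z' := hM z' hz'ball
      have hCsq : C/2 * ‖z' - z‖^2 ≤ |C|/2 * (r/2)^2 := by
        rw [hnz']
        have := le_abs_self C
        nlinarith [sq_nonneg (r/2)]
      rw [hinner, hnz'] at hsupp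
      rw [hK, le_div_iff₀ (by positivity : (0:ℝ) < r/2)]
      rw [hnz'] at hCsq
      linarith
    -- the direction and its positivity
    set θ := A x₀ (p s) with hθ
    clear_value θ
    set P : ℝ := ⟪A x₀ (p s), p s⟫ with hP
    have hPpos : 0 < P := by rw [hP]; exact hApos x₀ (p s) (hpne s hsmem)
    clear_value P
    have hpmem' : p s ∈ superdiffOn v Ω x₀ := by rw [hx₀def]; exact hpmem s hsmem
    have hpmin' : ∀ q ∈ superdiffOn v Ω x₀,
        ⟪A x₀ (p s), p s⟫ ≤ ⟪A x₀ q, q⟫ := by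
      rw [hx₀def]; exact hpmin s hsmem
    -- variational inequality
    have hvar : ∀ q' ∈ superdiffOn v Ω x₀, P ≤ ⟪A x₀ (p s), q'⟫ := by
      intro q' hq'
      set Q : ℝ := ⟪A x₀ (p s), q'⟫ with hQ
      set S' : ℝ := ⟪A x₀ q', q'⟫ with hS'
      clear_value Q S'
      have expand : ∀ t : ℝ, ⟪A x₀ ((1-t) • (p s) + t • q'), (1-t) • (p s) + t • q'⟫
          = (1-t)^2*P + 2*t*(1-t)*Q + t^2*S' := by
        intro t
        have hmap : A x₀ ((1-t) • (p s) + t • q')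
            = (1-t) • (A x₀ (p s)) + t • (A x₀ q') := by
          rw [map_add, map_smul, map_smul]
        rw [hmap]
        simp only [inner_add_left, inner_add_right, real_inner_smul_left, real_inner_smul_right]
        have hsym : ⟪A x₀ q', p s⟫ = Q := by
          rw [hAsymm x₀ q' (p s), real_inner_comm, ← hQ]
        rw [hsym, ← hP, ← hQ, ← hS']
        ring
      have hineq : ∀ t : ℝ, 0 < t → t ≤ 1 → 0 ≤ -(2-t)*P + 2*(1-t)*Q + t*S' := by
        intro t ht0 ht1
        have hqt : (1-t) • (p s) + t • q' ∈ superdiffOn v Ω x₀ :=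
          superdiffOn_convex v Ω x₀ hpmem' hq' ht0.le ht1
        have h1 := hpmin' _ hqt
        rw [expand t, ← hP] at h1
        have h2 : 0 ≤ t * (-(2-t)*P + 2*(1-t)*Q + t*S') := by linarith
        exact nonneg_of_mul_nonneg_right h2 ht0
      by_contra hQP
      push_neg at hQP
      set W : ℝ := P - 2*Q + S' with hW
      clear_value W
      rcases le_or_gt W 0 with hWle | hWpos
      · have h1 := hineq 1 one_pos (le_refl _)
        linarith
      · have ht0 : 0 < min 1 ((P - Q)/W) := lt_min one_pos (div_pos (by linarith) hWpos)
        have ht1 : min 1 ((P - Q)/W) ≤ 1 := min_le_left _ _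
        have htW : (min 1 ((P - Q)/W)) * W ≤ P - Q := by
          have h1 : min 1 ((P - Q)/W) ≤ (P - Q)/W := min_le_right _ _
          rw [← le_div_iff₀ hWpos]
          exact h1
        have h2 := hineq _ ht0 ht1
        have hWt : (min 1 ((P - Q)/W))*W
            = (min 1 ((P - Q)/W))*P - 2*((min 1 ((P - Q)/W))*Q) + (min 1 ((P - Q)/W))*S' := by
          rw [hW]; ring
        linarith
    -- the directional derivative limit
    obtain ⟨m, hm_least, hm_t⟩ := hdir x₀ hx₀Ω θ
    have hmP : P ≤ m := by
      obtain ⟨q', hq', hq'eq⟩ := hm_least.1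
      have h1 := hvar q' hq'
      rw [hq'eq]
      calc P ≤ ⟪A x₀ (p s), q'⟫ := h1
        _ = ⟪q', θ⟫ := by rw [hθ, real_inner_comm]
    have hev : ∀ᶠ h in nhdsWithin 0 (Ioi (0:ℝ)), 3*P/4 < (v (x₀ + h • θ) - v x₀)/h :=
      hm_t.eventually (eventually_gt_nhds (by linarith))
    rw [eventually_nhdsWithin_iff] at hev
    obtain ⟨δ₁, hδ₁, H₁⟩ := Metric.eventually_nhds_iff.mp hev
    -- the slope estimate
    set ε' : ℝ := min 1 (P/(8*(K+1))) with hε'def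
    have hε' : 0 < ε' := lt_min one_pos (div_pos hPpos (by linarith))
    have hε'1 : ε' ≤ 1 := min_le_left _ _
    have hε'K : ε' ≤ P/(8*(K+1)) := min_le_right _ _
    clear_value ε'
    have hslθ : Tendsto (slope γ s) (nhdsWithin s (Ici s \ {s})) (nhds θ) := by
      rw [hθ, hx₀def]
      exact hasDerivWithinAt_iff_tendsto_slope.mp (hderiv s hsmem)
    have hev2 : ∀ᶠ t in nhdsWithin s (Ici s \ {s}), dist (slope γ s t) θ < ε' := by
      have h1 := hslθ (Metric.ball_mem_nhds θ hε')
      filter_upwards [h1] with t ht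
      exact Metric.mem_ball.mp ht
    rw [eventually_nhdsWithin_iff] at hev2
    obtain ⟨δ₂, hδ₂, H₂⟩ := Metric.eventually_nhds_iff.mp hev2
    -- choose δ
    set δ : ℝ := (1/2) * min δ₁ (min δ₂ (min (r/(2*((L:ℝ)+1)))
      (min ((2*R)/(‖θ‖+1)) (P/(4*(|C|+1)))))) with hδdef
    have hδpos : 0 < δ := by
      rw [hδdef]
      apply mul_pos (by norm_num)
      apply lt_min hδ₁
      apply lt_min hδ₂
      apply lt_min (div_pos hr (by positivity))
      exact lt_min (div_pos (by linarith) (by positivity)) (div_pos hPpos (by positivity))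
    have hδle₁ : δ < δ₁ := by
      rw [hδdef]
      have h1 : min δ₁ (min δ₂ (min (r/(2*((L:ℝ)+1)))
          (min ((2*R)/(‖θ‖+1)) (P/(4*(|C|+1)))))) ≤ δ₁ := min_le_left _ _
      have h2 : 0 < min δ₁ (min δ₂ (min (r/(2*((L:ℝ)+1)))
          (min ((2*R)/(‖θ‖+1)) (P/(4*(|C|+1)))))) := by
        rw [hδdef] at hδpos
        linarith [hδpos]
      linarith
    have hδle₂ : δ < δ₂ := by
      rw [hδdef]
      have h1 : min δ₁ (min δ₂ (min (r/(2*((L:ℝ)+1)))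
          (min ((2*R)/(‖θ‖+1)) (P/(4*(|C|+1)))))) ≤ δ₂ :=
        le_trans (min_le_right _ _) (min_le_left _ _)
      have h2 : 0 < min δ₁ (min δ₂ (min (r/(2*((L:ℝ)+1)))
          (min ((2*R)/(‖θ‖+1)) (P/(4*(|C|+1)))))) := by
        rw [hδdef] at hδpos
        linarith [hδpos]
      linarith
    have hδle₃ : δ ≤ r/(2*((L:ℝ)+1)) := by
      rw [hδdef]
      have h1 : min δ₁ (min δ₂ (min (r/(2*((L:ℝ)+1)))
          (min ((2*R)/(‖θ‖+1)) (P/(4*(|C|+1)))))) ≤ r/(2*((L:ℝ)+1)) :=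
        le_trans (min_le_right _ _) (le_trans (min_le_right _ _) (min_le_left _ _))
      have h2 : 0 ≤ r/(2*((L:ℝ)+1)) := by positivity
      linarith
    have hδle₄ : δ ≤ (2*R)/(‖θ‖+1) := by
      rw [hδdef]
      have h1 : min δ₁ (min δ₂ (min (r/(2*((L:ℝ)+1)))
          (min ((2*R)/(‖θ‖+1)) (P/(4*(|C|+1)))))) ≤ (2*R)/(‖θ‖+1) :=
        le_trans (min_le_right _ _) (le_trans (min_le_right _ _)
          (le_trans (min_le_right _ _) (min_le_left _ _)))
      have h2 : (0:ℝ) ≤ (2*R)/(‖θ‖+1) := by positivity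
      linarith
    have hδle₅ : δ ≤ P/(4*(|C|+1)) := by
      rw [hδdef]
      have h1 : min δ₁ (min δ₂ (min (r/(2*((L:ℝ)+1)))
          (min ((2*R)/(‖θ‖+1)) (P/(4*(|C|+1)))))) ≤ P/(4*(|C|+1)) :=
        le_trans (min_le_right _ _) (le_trans (min_le_right _ _)
          (le_trans (min_le_right _ _) (min_le_right _ _)))
      have h2 : (0:ℝ) ≤ P/(4*(|C|+1)) := div_nonneg hPpos.le (by positivity)
      linarith
    clear_value δ
    refine ⟨δ, hδpos, fun t hst htδ htτ => ?_⟩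
    set h : ℝ := t - s with hhdef
    have hh0 : 0 < h := by rw [hhdef]; linarith
    have hhδ : h ≤ δ := by rw [hhdef]; linarith
    clear_value h
    have htmem : t ∈ Icc 0 τ := ⟨by linarith [hs.1], htτ⟩
    -- the ray point estimate
    have hray : v x₀ + (3*P/4) * h ≤ v (x₀ + h • θ) := by
      have h1 : dist h 0 < δ₁ := by
        rw [Real.dist_eq, sub_zero, abs_of_pos hh0]; linarith
      have h2 := H₁ h1 hh0
      rw [lt_div_iff₀ hh0] at h2
      linarith
    -- the slope estimate at t
    have hslope : ‖γ t - γ s - h • θ‖ ≤ ε' * h := by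
      have h1 : dist t s < δ₂ := by
        rw [Real.dist_eq, abs_of_pos (by linarith : (0:ℝ) < t - s)]
        linarith
      have hts : t ∈ Ici s \ {s} := by
        constructor
        · exact le_of_lt hst
        · simp only [mem_singleton_iff]
          intro hcontra
          rw [hcontra] at hst
          exact lt_irrefl _ hst
      have h2 := H₂ h1 hts
      have h3 : γ t - γ s - h • θ = h • (slope γ s t - θ) := by
        rw [smul_sub]
        congr 1
        rw [slope_def_module, smul_smul, hhdef]
        rw [mul_inv_cancel₀ (by linarith : t - s ≠ 0), one_smul]
      rw [h3, norm_smul, Real.norm_eq_abs, abs_of_pos hh0]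
      rw [dist_eq_norm] at h2
      calc h * ‖slope γ s t - θ‖ ≤ h * ε' := mul_le_mul_of_nonneg_left h2.le hh0.le
        _ = ε' * h := by ring
    -- γ t is in the small ball
    have hγt_ball : γ t ∈ Metric.closedBall x₀ (r/2) := by
      rw [Metric.mem_closedBall]
      have h1 : dist (γ t) (γ s) ≤ (L:ℝ) * dist t s := hLip.dist_le_mul t htmem s hsmem
      rw [Real.dist_eq, abs_of_pos (by linarith : (0:ℝ) < t - s)] at h1
      have h2 : (L:ℝ) * (t - s) ≤ (L:ℝ) * δ := by
        apply mul_le_mul_of_nonneg_left ?_ hLpos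
        linarith
      have h3 : (L:ℝ) * δ ≤ r/2 := by
        have h5 := mul_le_mul_of_nonneg_left hδle₃ hLpos
        have h4 : (L:ℝ) * (r/(2*((L:ℝ)+1))) ≤ r/2 := by
          rw [← mul_div_assoc, div_le_div_iff₀ (by positivity) (by norm_num)]
          nlinarith
        linarith
      have h6 : dist (γ t) x₀ = dist (γ t) (γ s) := by rw [hx₀def]
      rw [h6]
      linarith
    have hγtΩ : γ t ∈ Ω := hmaps t htmem
    -- the ray point is in Ω
    have haΩ : x₀ + h • θ ∈ Ω := by
      apply hball
      rw [Metric.mem_closedBall, dist_eq_norm]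
      have h1 : x₀ + h • θ - x₀ = h • θ := by abel
      rw [h1, norm_smul, Real.norm_eq_abs, abs_of_pos hh0]
      have h2 : h * ‖θ‖ ≤ δ * (‖θ‖+1) := by nlinarith [norm_nonneg θ]
      have h3 : δ * (‖θ‖+1) ≤ 2*R := by
        rw [← le_div_iff₀ (by positivity : (0:ℝ) < ‖θ‖+1)]
        exact hδle₄
      linarith
    -- support inequality at γ t
    have hpt : p t ∈ superdiffOn v Ω (γ t) := hpmem t htmem
    have hptK : ‖p t‖ ≤ K := hKbound (γ t) hγt_ball (p t) hpt
    have hsupp := hsc (γ t) hγtΩ (p t) hpt (x₀ + h • θ) haΩ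
    have hdiff : ‖x₀ + h • θ - γ t‖ ≤ ε' * h := by
      have h1 : x₀ + h • θ - γ t = -(γ t - γ s - h • θ) := by
        rw [hx₀def]; abel
      rw [h1, norm_neg]
      exact hslope
    have hinner_bd : ⟪p t, x₀ + h • θ - γ t⟫ ≤ P/8 * h := by
      calc ⟪p t, x₀ + h • θ - γ t⟫ ≤ ‖p t‖ * ‖x₀ + h • θ - γ t‖ := real_inner_le_norm _ _
        _ ≤ K * (ε' * h) := by
            apply mul_le_mul hptK hdiff (norm_nonneg _) hK0
        _ ≤ P/8 * h := by
            have h1 : K * ε' ≤ (K+1) * (P/(8*(K+1))) := by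
              apply mul_le_mul (by linarith) hε'K (le_of_lt hε') (by linarith)
            have h2 : (K+1) * (P/(8*(K+1))) = P/8 := by
              have hK1 : K + 1 ≠ 0 := by linarith
              field_simp
            have h3 : K*ε'*h ≤ P/8*h :=
              mul_le_mul_of_nonneg_right (le_trans h1 (le_of_eq h2)) hh0.le
            linarith
    have hsq_bd : C/2 * ‖x₀ + h • θ - γ t‖^2 ≤ P/8 * h := by
      have h1 : C/2 * ‖x₀ + h • θ - γ t‖^2 ≤ |C|/2 * (ε' * h)^2 := by
        have ha : C/2 * ‖x₀ + h • θ - γ t‖^2 ≤ |C|/2 * ‖x₀ + h • θ - γ t‖^2 := by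
          apply mul_le_mul_of_nonneg_right ?_ (sq_nonneg _)
          have := le_abs_self C; linarith
        have hb : |C|/2 * ‖x₀ + h • θ - γ t‖^2 ≤ |C|/2 * (ε' * h)^2 := by
          apply mul_le_mul_of_nonneg_left ?_ (by positivity)
          nlinarith [norm_nonneg (x₀ + h • θ - γ t)]
        linarith
      have h2 : (ε' * h)^2 ≤ h^2 := by
        have e : (ε'*h)^2 = ε'^2 * h^2 := by ring
        have e2 : ε'^2 ≤ 1 := by nlinarith [hε'1, hε'.le]
        have e3 : ε'^2 * h^2 ≤ 1 * h^2 := mul_le_mul_of_nonneg_right e2 (sq_nonneg h)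
        rw [e]; linarith
      have h3 : |C|/2 * h^2 ≤ P/8 * h := by
        have h4 : h ≤ P/(4*(|C|+1)) := le_trans hhδ hδle₅
        have h5 : h * (4*(|C|+1)) ≤ P := by
          rw [← le_div_iff₀ (by positivity : (0:ℝ) < 4*(|C|+1))]
          exact h4
        have h7 : |C|/2 * h ≤ P/8 := by nlinarith [abs_nonneg C, hh0]
        have h8 := mul_le_mul_of_nonneg_right h7 hh0.le
        nlinarith [h8]
      have h6 : |C|/2 * (ε' * h)^2 ≤ |C|/2 * h^2 :=
        mul_le_mul_of_nonneg_left h2 (by positivity)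
      linarith
    -- conclusion
    have hfinal : v x₀ + (P/2) * h ≤ v (γ t) := by
      linarith [hray, hsupp, hinner_bd, hsq_bd]
    have hP2 : 0 < (P/2) * h := by positivity
    linarith
  exact mono_glue (fun u => v (γ u)) τ husc hLI
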